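/- arXiv:2003.06916 — 3 statements merged into one kernel-verified Lean document; each statement's English description precedes it below -/
import Mathlib

section
/- If a sequence u over a finite alphabet contains an overlapping factor (i.e., there exist words x, y and a non-empty factor w of u with xw = wy a factor of u and 0 < |x| < |w|), then the critical exponent of u is strictly greater than 2. -/
/-- `w` occurs in the sequence `u` at position `i`. -/
def OccursAt {α : Type*} (u : ℕ → α) (w : List α) (i : ℕ) : Prop :=
  ∀ k < w.length, w[k]? = some (u (i + k))

/-- `w` is a factor of the sequence `u`. -/
def IsFactor {α : Type*} (u : ℕ → α) (w : List α) : Prop :=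
  ∃ i, OccursAt u w i

/-- `z` has fractional root `r`: `z` is a prefix of the periodic sequence `r^ω`. -/
def HasRoot {α : Type*} (z r : List α) : Prop :=
  r ≠ [] ∧ ∀ k < z.length, z[k]? = r[k % r.length]?

/-- The index of `w` in `u`: the supremum of exponents `|z|/|w|` over factors `z`
of `u` with fractional root `w`. -/
noncomputable def ind {α : Type*} (u : ℕ → α) (w : List α) : EReal :=
  sSup {e : EReal | ∃ z : List α, IsFactor u z ∧ HasRoot z w ∧
    e = (((z.length : ℝ) / (w.length : ℝ) : ℝ) : EReal)}

/-- The critical exponent of `u`: the supremum of indices of non-empty factors. -/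
noncomputable def critExp {α : Type*} (u : ℕ → α) : EReal :=
  sSup {e : EReal | ∃ w : List α, w ≠ [] ∧ IsFactor u w ∧ e = ind u w}

/-- If a sequence over a finite alphabet has an overlapping factor, then its
critical exponent is strictly greater than `2`. -/
theorem critExp_gt_two_of_overlap {α : Type*} [Fintype α] (u : ℕ → α)
    (x y w : List α) (hw : w ≠ []) (hfac : IsFactor u (x ++ w))
    (hxy : x ++ w = w ++ y) (hx : 0 < x.length) (hxw : x.length < w.length) :
    (2 : EReal) < critExp u := by
  set v := x ++ w with hv
  have hxne : x ≠ [] := by intro h; simp [h] at hx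
  have hroot : HasRoot v x := by
    refine ⟨hxne, ?_⟩
    intro k hk
    induction k using Nat.strong_induction_on with
    | _ k ih =>
      rcases lt_or_ge k x.length with h | h
      · rw [Nat.mod_eq_of_lt h, hv, List.getElem?_append_left h]
      · have hvlen : v.length = x.length + w.length := by simp [hv]
        have hk' : k - x.length < w.length := by omega
        have h1 : v[k]? = w[k - x.length]? := by
          rw [hv, List.getElem?_append_right h]
        have h2 : w[k - x.length]? = v[k - x.length]? := by
          rw [show v[k - x.length]? = (w ++ y)[k - x.length]? by rw [← hxy],
            List.getElem?_append_left hk']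
        have h3 : v[k - x.length]? = x[(k - x.length) % x.length]? :=
          ih (k - x.length) (by omega) (by omega)
        rw [h1, h2, h3, Nat.mod_eq_sub_mod h]
  have hxfac : IsFactor u x := by
    obtain ⟨i, hi⟩ := hfac
    refine ⟨i, fun k hk => ?_⟩
    have := hi k (by simp [hv]; omega)
    rwa [hv, List.getElem?_append_left hk] at this
  have hind : (((v.length : ℝ) / (x.length : ℝ) : ℝ) : EReal) ≤ ind u x :=
    le_sSup ⟨v, hfac, hroot, rfl⟩
  have hcrit : ind u x ≤ critExp u := le_sSup ⟨x, hxne, hxfac, rfl⟩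
  refine lt_of_lt_of_le (lt_of_lt_of_le ?_ hind) hcrit
  have hlt : (2:ℝ) < (v.length:ℝ)/(x.length:ℝ) := by
    have hvlen : v.length = x.length + w.length := by simp [hv]
    rw [lt_div_iff₀ (by exact_mod_cast hx)]
    rw [hvlen]
    push_cast
    have : (x.length : ℝ) < w.length := by exact_mod_cast hxw
    linarith
  have : ((2:ℝ):EReal) < (((v.length:ℝ)/(x.length:ℝ) : ℝ) : EReal) :=
    EReal.coe_lt_coe_iff.mpr hlt
  convert this using 2
  rfl
end

section
/- Let φ be a morphism on words over an alphabet A, and let w be a word that is a prefix of φ(a) for every letter a ∈ A. If u is a fractional root of z (i.e., z is a prefix of u^ω), then φ(u) is a fractional root of φ(z)·w, i.e., φ(z)w is a prefix of (φ(u))^ω. -/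
/-- If `φ` is a morphism, `w` is a common prefix of all images of letters, and
`u` is a fractional root of `z` (i.e. `z` is a prefix of a power of `u`), then
`φ(u)` is a fractional root of `φ(z)·w`. -/
theorem morphism_fractional_root {α : Type*} (φ : List α → List α)
    (hφ : ∀ x y : List α, φ (x ++ y) = φ x ++ φ y)
    (w : List α) (hw : ∀ a : α, w <+: φ [a])
    (u z : List α) (hu : u ≠ [])
    (hroot : ∃ k, z <+: (List.replicate k u).flatten) :
    ∃ k, (φ z ++ w) <+: (List.replicate k (φ u)).flatten := by
  have hφnil : φ [] = [] := by
    have h := hφ [] []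
    simp only [List.append_nil] at h
    exact (List.self_eq_append_left.mp h)
  have key : ∀ n : ℕ, φ ((List.replicate n u).flatten) = (List.replicate n (φ u)).flatten := by
    intro n
    induction n with
    | zero => simpa using hφnil
    | succ n ih => simp [List.replicate_succ, hφ, ih]
  have hwprefix : ∀ v : List α, v ≠ [] → w <+: φ v := by
    intro v hv
    obtain ⟨a, l, rfl⟩ := List.exists_cons_of_ne_nil hv
    have : φ (a :: l) = φ [a] ++ φ l := by
      have := hφ [a] l; simpa using this
    rw [this]
    exact (hw a).trans (List.prefix_append _ _)
  obtain ⟨k, t, ht⟩ := hroot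
  rcases eq_or_ne t [] with rfl | htne
  · -- z = u^k
    refine ⟨k + 1, ?_⟩
    rw [List.replicate_succ', List.flatten_append]
    simp only [List.append_nil] at ht
    have hz : φ z = (List.replicate k (φ u)).flatten := by rw [ht]; exact key k
    rw [hz]
    simp only [List.flatten_cons, List.flatten_nil, List.append_nil]
    obtain ⟨s, hs⟩ := hwprefix u hu
    exact ⟨s, by rw [List.append_assoc, hs]⟩
  · refine ⟨k, ?_⟩
    rw [← key k, ← ht, hφ]
    obtain ⟨s, hs⟩ := hwprefix t htne
    exact ⟨s, by rw [List.append_assoc, hs]⟩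
end

section
/- The period doubling sequence 𝐮, the fixed point of the morphism φ: 0 ↦ 11, 1 ↦ 10 starting with 1, has critical exponent exactly 4. In particular, setting u^(n) = φ^n(1) and w^(0) = 111, w^(n+1) = φ(w^(n))·1, each w^(n) is a factor of 𝐮 with fractional root u^(n), |u^(n)| = 2^n, |w^(n)| = 2^{n+2} − 1, hence ind(u^(n)) ≥ (2^{n+2}−1)/2^n → 4. -/
/-- The period doubling substitution `φ(0) = 11`, `φ(1) = 10`. -/
def pdphi : Fin 2 → List (Fin 2) := fun a => if a = 0 then [1, 1] else [1, 0]

/-- The extension of `φ` to binary words. -/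
def pdW (w : List (Fin 2)) : List (Fin 2) := w.flatMap pdphi

/-- The prefix of length `n` of a sequence. -/
def pref (u : ℕ → Fin 2) (n : ℕ) : List (Fin 2) := (List.range n).map u

/-- `u⁽ⁿ⁾ = φⁿ(1)`. -/
def uuWord : ℕ → List (Fin 2) := fun n => pdW^[n] [1]

/-- `w⁽⁰⁾ = 111`, `w⁽ⁿ⁺¹⁾ = φ(w⁽ⁿ⁾)·1`. -/
def wwWord : ℕ → List (Fin 2)
  | 0 => [1, 1, 1]
  | n + 1 => pdW (wwWord n) ++ [1]



lemma pdphi_length (a : Fin 2) : (pdphi a).length = 2 := by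
  fin_cases a <;> rfl

lemma pdphi_zero (a : Fin 2) : (pdphi a)[0]? = some 1 := by
  fin_cases a <;> rfl

lemma pdW_cons (a : Fin 2) (t : List (Fin 2)) : pdW (a :: t) = pdphi a ++ pdW t := by
  simp [pdW]

lemma pdW_append (l1 l2 : List (Fin 2)) : pdW (l1 ++ l2) = pdW l1 ++ pdW l2 := by
  simp [pdW]

lemma pdW_length (l : List (Fin 2)) : (pdW l).length = 2 * l.length := by
  induction l with
  | nil => rfl
  | cons a t ih => rw [pdW_cons]; simp [pdphi_length, ih]; ring

lemma pdW_get : ∀ (l : List (Fin 2)) (k b : ℕ) (a : Fin 2), b < 2 → l[k]? = some a →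
    (pdW l)[2 * k + b]? = (pdphi a)[b]?
  | [], k, b, a, hb, h => by simp at h
  | c :: t, 0, b, a, hb, h => by
      simp at h
      subst h
      rw [pdW_cons, show 2 * 0 + b = b from by omega,
        List.getElem?_append_left (by rw [pdphi_length]; omega)]
  | c :: t, k + 1, b, a, hb, h => by
      rw [pdW_cons, List.getElem?_append_right (by rw [pdphi_length]; omega)]
      have : 2 * (k + 1) + b - (pdphi c).length = 2 * k + b := by rw [pdphi_length]; omega
      rw [this]
      exact pdW_get t k b a hb (by simpa using h)

section

variable (u : ℕ → Fin 2)

lemma pref_length (n : ℕ) : (pref u n).length = n := by simp [pref]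

lemma pref_succ (n : ℕ) : pref u (n + 1) = pref u n ++ [u n] := by
  simp [pref, List.range_succ]

lemma pref_get (n k : ℕ) (h : k < n) : (pref u n)[k]? = some (u k) := by
  simp [pref, List.getElem?_map, List.getElem?_range h]

variable (hfix : ∀ n, pref u (2 * n) = pdW (pref u n))
include hfix

lemma pdphi_u (m : ℕ) : pdphi (u m) = [u (2 * m), u (2 * m + 1)] := by
  have h := hfix (m + 1)
  rw [pref_succ, pdW_append, ← hfix m] at h
  have h2 : pref u (2 * (m + 1)) = pref u (2 * m) ++ [u (2 * m), u (2 * m + 1)] := by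
    have : 2 * (m + 1) = (2 * m + 1) + 1 := by ring
    rw [this, pref_succ, pref_succ]
    simp
  rw [h2] at h
  have := List.append_cancel_left h
  simp [pdW] at this
  exact this.symm

lemma u_even (m : ℕ) : u (2 * m) = 1 := by
  have h := pdphi_u u hfix m
  have h2 : (pdphi (u m))[0]? = some 1 := pdphi_zero (u m)
  rw [h] at h2
  simpa using h2

lemma u_odd (m : ℕ) : u (2 * m + 1) = 1 - u m := by
  have h := pdphi_u u hfix m
  have h2 : (pdphi (u m))[1]? = some (1 - u m) := by
    generalize u m = a; fin_cases a <;> rfl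
  rw [h] at h2
  simpa using h2

lemma u_one_mod_four (m : ℕ) (h : m % 4 = 1) : u m = 0 := by
  have hm : m = 2 * (2 * (m / 4)) + 1 := by omega
  rw [hm, u_odd u hfix, u_even u hfix]
  rfl

lemma mismatch : ∀ p, 0 < p → ∀ i, ∃ j, i ≤ j ∧ j < i + 3 * p ∧ u j ≠ u (j + p) := by
  intro p
  induction p using Nat.strong_induction_on with
  | _ p IH =>
    intro hp i
    rcases Nat.even_or_odd p with ⟨p', hpe⟩ | hodd
    · subst hpe
      obtain ⟨m, hm1, hm2, hm⟩ := IH p' (by omega) (by omega) (i / 2)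
      refine ⟨2 * m + 1, by omega, by omega, ?_⟩
      have e1 : 2 * m + 1 + (p' + p') = 2 * (m + p') + 1 := by ring
      rw [e1, u_odd u hfix, u_odd u hfix]
      revert hm
      generalize u m = a; generalize u (m + p') = b
      revert a b; decide
    · have hpodd : p % 2 = 1 := Nat.odd_iff.mp hodd
      set r := (5 - i % 4) % 4 with hr
      by_cases hcase : r < 3 * p
      · refine ⟨i + r, by omega, by omega, ?_⟩
        have h1 : (i + r) % 4 = 1 := by omega
        have h2 : (i + r + p) % 2 = 0 := by omega
        rw [u_one_mod_four u hfix _ h1,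
          show i + r + p = 2 * ((i + r + p) / 2) by omega, u_even u hfix]
        decide
      · -- r = 3, p = 1, i % 4 = 2
        have hp1 : p = 1 := by omega
        have hi4 : i % 4 = 2 := by omega
        refine ⟨i + 2, by omega, by omega, ?_⟩
        rw [u_one_mod_four u hfix (i + 2 + p) (by omega),
          show i + 2 = 2 * ((i + 2) / 2) by omega, u_even u hfix]
        decide

end

lemma uuWord_succ (n : ℕ) : uuWord (n + 1) = pdW (uuWord n) :=
  Function.iterate_succ_apply' pdW n [1]

lemma uuWord_length (n : ℕ) : (uuWord n).length = 2 ^ n := by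
  induction n with
  | zero => rfl
  | succ n ih => rw [uuWord_succ, pdW_length, ih]; ring

lemma uuWord_ne_nil (n : ℕ) : uuWord n ≠ [] := by
  apply List.ne_nil_of_length_pos
  rw [uuWord_length]
  positivity

lemma wwWord_length (n : ℕ) : (wwWord n).length = 2 ^ (n + 2) - 1 := by
  induction n with
  | zero => rfl
  | succ n ih =>
      show (pdW (wwWord n) ++ [1]).length = _
      rw [List.length_append, pdW_length, ih]
      have h4 : 4 ≤ 2 ^ (n + 2) := by
        calc (4:ℕ) = 2 ^ 2 := rfl
        _ ≤ 2 ^ (n + 2) := Nat.pow_le_pow_right (by norm_num) (by omega)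
      have e : (2:ℕ) ^ (n + 1 + 2) = 2 * 2 ^ (n + 2) := by ring
      simp only [List.length_singleton]
      omega

lemma pdW_get' (l : List (Fin 2)) (k : ℕ) (a : Fin 2) (hk : k < 2 * l.length)
    (h : l[k / 2]? = some a) : (pdW l)[k]? = (pdphi a)[k % 2]? := by
  have h2 := pdW_get l (k / 2) (k % 2) a (by omega) h
  rw [show 2 * (k / 2) + k % 2 = k by omega] at h2
  exact h2

lemma hasRoot_step {z r : List (Fin 2)} (h : HasRoot z r) : HasRoot (pdW z ++ [1]) (pdW r) := by
  obtain ⟨hrne, hroot⟩ := h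
  have hrlen : 0 < r.length := List.length_pos_iff.mpr hrne
  constructor
  · apply List.ne_nil_of_length_pos
    rw [pdW_length]
    omega
  · intro k hk
    rw [List.length_append, pdW_length] at hk
    simp at hk
    rw [pdW_length]
    by_cases hkz : k < 2 * z.length
    · -- interior
      have hk2 : k / 2 < z.length := by omega
      have ha : z[k / 2]? = some (z[k / 2]'hk2) := List.getElem?_eq_getElem hk2
      set a := z[k / 2]'hk2 with haa
      have hra : r[(k / 2) % r.length]? = some a := (hroot (k / 2) hk2).symm.trans ha
      have lhs : (pdW z ++ [1])[k]? = (pdphi a)[k % 2]? := by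
        rw [List.getElem?_append_left (by rw [pdW_length]; omega)]
        exact pdW_get' z k a hkz ha
      have e1 : k % (2 * r.length) % 2 = k % 2 := Nat.mod_mod_of_dvd k ⟨r.length, rfl⟩
      have e2 : k % (2 * r.length) / 2 = (k / 2) % r.length :=
        Nat.mod_mul_right_div_self k 2 r.length
      have rhs : (pdW r)[k % (2 * r.length)]? = (pdphi a)[k % 2]? := by
        rw [pdW_get' r (k % (2 * r.length)) a (Nat.mod_lt _ (by omega)) (by rw [e2]; exact hra),
          e1]
      rw [lhs, rhs]
    · -- last position
      have hke : k = 2 * z.length := by omega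
      have lhs : (pdW z ++ [1])[k]? = some 1 := by
        rw [List.getElem?_append_right (by rw [pdW_length]; omega)]
        rw [pdW_length, hke]
        simp
      have hj : z.length % r.length < r.length := Nat.mod_lt _ hrlen
      have hrj : r[z.length % r.length]? = some (r[z.length % r.length]'hj) :=
        List.getElem?_eq_getElem hj
      have rhs : (pdW r)[k % (2 * r.length)]? = some 1 := by
        rw [hke, Nat.mul_mod_mul_left]
        have := pdW_get r (z.length % r.length) 0 _ (by omega) hrj
        rw [show 2 * (z.length % r.length) + 0 = 2 * (z.length % r.length) by omega] at this
        rw [this, pdphi_zero]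
      rw [lhs, rhs]

lemma hasRoot_ww (n : ℕ) : HasRoot (wwWord n) (uuWord n) := by
  induction n with
  | zero =>
      refine ⟨by simp [uuWord], ?_⟩
      intro k hk
      have hk3 : k < 3 := by simpa [wwWord] using hk
      interval_cases k <;> decide
  | succ n ih =>
      rw [uuWord_succ]
      exact hasRoot_step ih

section
variable (u : ℕ → Fin 2) (h1 : u 0 = 1) (hfix : ∀ n, pref u (2 * n) = pdW (pref u n))
include hfix

lemma pdphi_u_get (m b : ℕ) (hb : b < 2) : (pdphi (u m))[b]? = some (u (2 * m + b)) := by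
  rw [pdphi_u u hfix m]
  interval_cases b <;> rfl

lemma occursAt_step {w : List (Fin 2)} {i : ℕ} (h : OccursAt u w i) :
    OccursAt u (pdW w ++ [1]) (2 * i) := by
  intro k hk
  rw [List.length_append, pdW_length, List.length_singleton] at hk
  by_cases hkw : k < 2 * w.length
  · have hk2 : k / 2 < w.length := by omega
    have ha := h (k / 2) hk2
    rw [List.getElem?_append_left (by rw [pdW_length]; omega),
      pdW_get' w k _ hkw ha, pdphi_u_get u hfix (i + k / 2) (k % 2) (by omega)]
    rw [show 2 * (i + k / 2) + k % 2 = 2 * i + k by omega]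
  · have hke : k = 2 * w.length := by omega
    rw [List.getElem?_append_right (by rw [pdW_length]; omega), pdW_length, hke]
    simp
    rw [show 2 * i + 2 * w.length = 2 * (i + w.length) by ring, u_even u hfix]

include h1

lemma factor_ww (n : ℕ) : IsFactor u (wwWord n) := by
  induction n with
  | zero =>
      refine ⟨2, ?_⟩
      have hu1 : u 1 = 0 := by
        have h := u_odd u hfix 0
        norm_num [h1] at h
        exact h
      have hu2 : u 2 = 1 := u_even u hfix 1
      have hu3 : u 3 = 1 := by
        have h := u_odd u hfix 1
        norm_num [hu1] at h
        exact h
      have hu4 : u 4 = 1 := u_even u hfix 2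
      intro k hk
      have hk3 : k < 3 := by simpa [wwWord] using hk
      interval_cases k
      · simpa [wwWord] using hu2.symm
      · simpa [wwWord] using hu3.symm
      · simpa [wwWord] using hu4.symm
  | succ n ih =>
      obtain ⟨i, hi⟩ := ih
      exact ⟨2 * i, occursAt_step u hfix hi⟩

lemma factor_uu (n : ℕ) : IsFactor u (uuWord n) := by
  obtain ⟨i, hi⟩ := factor_ww u h1 hfix n
  have hroot := (hasRoot_ww n).2
  have hlen : (uuWord n).length ≤ (wwWord n).length := by
    rw [uuWord_length, wwWord_length]
    have h4 : 2 ^ n * 1 < 2 ^ n * 4 := by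
      have := pow_pos (show (0:ℕ) < 2 by norm_num) n
      omega
    have e : (2:ℕ) ^ (n + 2) = 2 ^ n * 4 := by ring
    omega
  refine ⟨i, fun k hk => ?_⟩
  have h2 := hroot k (lt_of_lt_of_le hk hlen)
  rw [Nat.mod_eq_of_lt hk] at h2
  rw [← h2]
  exact hi k (lt_of_lt_of_le hk hlen)

end

section
variable (u : ℕ → Fin 2) (h1 : u 0 = 1) (hfix : ∀ n, pref u (2 * n) = pdW (pref u n))
include h1 hfix

lemma ind_lower (n : ℕ) :
    ((((2 ^ (n + 2) - 1 : ℝ) / (2 ^ n : ℝ) : ℝ)) : EReal) ≤ ind u (uuWord n) := by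
  apply le_sSup
  refine ⟨wwWord n, factor_ww u h1 hfix n, hasRoot_ww n, ?_⟩
  congr 1
  rw [wwWord_length, uuWord_length]
  have hle : (1:ℕ) ≤ 2 ^ (n + 2) := Nat.one_le_two_pow
  rw [Nat.cast_sub hle]
  push_cast
  ring

omit h1 in
lemma ind_upper (w : List (Fin 2)) : ind u w ≤ 4 := by
  apply sSup_le
  rintro e ⟨z, ⟨i, hocc⟩, ⟨hwne, hroot⟩, rfl⟩
  have hp : 0 < w.length := List.length_pos_iff.mpr hwne
  have hzlen : z.length ≤ 4 * w.length := by
    by_contra hlen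
    push_neg at hlen
    obtain ⟨j, hj1, hj2, hne⟩ := mismatch u hfix w.length hp i
    apply hne
    have hk1 : j - i < z.length := by omega
    have hk2 : j - i + w.length < z.length := by omega
    have e1 := (hocc _ hk1).symm.trans (hroot _ hk1)
    have e2 := (hocc _ hk2).symm.trans (hroot _ hk2)
    rw [Nat.add_mod_right] at e2
    have e3 := e1.trans e2.symm
    rw [show i + (j - i) = j by omega,
      show i + (j - i + w.length) = j + w.length by omega] at e3
    exact Option.some.inj e3
  have hreal : ((z.length : ℝ) / (w.length : ℝ)) ≤ 4 := by
    rw [div_le_iff₀ (by exact_mod_cast hp)]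
    exact_mod_cast hzlen
  calc (((z.length : ℝ) / (w.length : ℝ) : ℝ) : EReal) ≤ ((4:ℝ) : EReal) := by
        exact_mod_cast hreal
    _ = 4 := by norm_cast

lemma critExp_eq : critExp u = (4 : EReal) := by
  have hub : ∀ n : ℕ,
      ((((2 ^ (n + 2) - 1 : ℝ) / (2 ^ n : ℝ) : ℝ)) : EReal) ≤ critExp u := fun n =>
    le_trans (ind_lower u h1 hfix n)
      (le_sSup ⟨uuWord n, uuWord_ne_nil n, factor_uu u h1 hfix n, rfl⟩)
  apply le_antisymm
  · apply sSup_le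
    rintro e ⟨w, hwne, hf, rfl⟩
    exact ind_upper u hfix w
  · apply le_of_forall_lt
    intro c hc
    induction c using EReal.rec with
    | bot => exact lt_of_lt_of_le (EReal.bot_lt_coe _) (hub 0)
    | coe r =>
        have hr : r < 4 := by
          rw [show (4:EReal) = ((4:ℝ):EReal) by norm_cast] at hc
          exact_mod_cast hc
        obtain ⟨n, hn⟩ : ∃ n : ℕ, (1/2:ℝ)^n < 4 - r :=
          exists_pow_lt_of_lt_one (by linarith) (by norm_num)
        have h2 : (2:ℝ)^n ≠ 0 := by positivity
        have hq : (2^(n+2)-1:ℝ)/2^n = 4 - (1/2)^n := by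
          field_simp
          rw [mul_sub, ← mul_pow]
          norm_num
          ring
        refine lt_of_lt_of_le ?_ (hub n)
        rw [hq]
        exact EReal.coe_lt_coe_iff.mpr (by linarith)
    | top => exact absurd hc not_top_lt

end

/-- The period doubling sequence (the fixed point of `φ: 0 ↦ 11, 1 ↦ 10`
starting with `1`) has critical exponent exactly `4`; moreover each `w⁽ⁿ⁾` is a
factor with fractional root `u⁽ⁿ⁾`, `|u⁽ⁿ⁾| = 2ⁿ`, `|w⁽ⁿ⁾| = 2ⁿ⁺² − 1`, whence
`ind(u⁽ⁿ⁾) ≥ (2ⁿ⁺² − 1)/2ⁿ`. -/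
theorem periodDoubling_critExp_eq_four (u : ℕ → Fin 2)
    (h1 : u 0 = 1) (hfix : ∀ n, pref u (2 * n) = pdW (pref u n)) :
    critExp u = (4 : EReal) ∧
    ∀ n : ℕ, IsFactor u (wwWord n) ∧ HasRoot (wwWord n) (uuWord n) ∧
      (uuWord n).length = 2 ^ n ∧ (wwWord n).length = 2 ^ (n + 2) - 1 ∧
      ((((2 ^ (n + 2) - 1 : ℝ) / (2 ^ n : ℝ) : ℝ)) : EReal) ≤ ind u (uuWord n) := by
  exact ⟨critExp_eq u h1 hfix, fun n => ⟨factor_ww u h1 hfix n, hasRoot_ww n,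
    uuWord_length n, wwWord_length n, ind_lower u h1 hfix n⟩⟩
end
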